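/- Let P : [-1,1]² → [0,∞) be continuous, bounded, symmetric (P(w,w_*) = P(w_*,w)) and positive on [-1,1]², let ε > 0 and let 0 < ξ < 1/‖P‖_∞. Let (f_t^S, f_t^I) solve the pure social kinetic system with initial data such that f_0 = f_0^S + f_0^I is a probability measure. Denote ⟨w⟩ = ∫ w df_0(w), ρ^I = ∫ df_0^I and ρ^S = ∫ df_0^S. Then f_t^I converges weakly to ρ^I δ_{⟨w⟩} and f_t^S converges weakly to ρ^S δ_{⟨w⟩} as t → ∞, and there exists C > 0 such that Var[f_t] ≤ Var[f_0] e^{−Ct/ε} for all t ≥ 0, where f_t = f_t^S + f_t^I. -/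

import Mathlib

/-!
Convergence to consensus for the pure social kinetic system (Proposition `prop:consensus`).
-/

open MeasureTheory Set Filter

noncomputable section

/-- The measure is supported in `[-1,1]`. -/
def SuppIcc (μ : Measure ℝ) : Prop := μ (Icc (-1 : ℝ) 1)ᶜ = 0

/-- Variance of a (probability) measure on `ℝ`. -/
def var (f : Measure ℝ) : ℝ := (∫ w, w ^ 2 ∂f) - (∫ w, w ∂f) ^ 2

/-- `(fS, fI)` solves the pure social kinetic system: for every continuous test function `φ`
and every `t ≥ 0`,
`d/dt ∫φ dfH_t = (1/ε)∬[φ(w + ξP(w,w₁)(w₁-w)) - φ(w)] dfH_t(w) df_t(w₁)`, `H ∈ {S,I}`,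
where `f_t = fS_t + fI_t`. -/
def SolvesPureSocial (ε ξ : ℝ) (P : ℝ → ℝ → ℝ) (fS fI : ℝ → Measure ℝ) : Prop :=
  ∀ φ : C(ℝ, ℝ), ∀ t ∈ Ici (0 : ℝ),
    HasDerivWithinAt (fun s => ∫ w, φ w ∂(fS s))
      ((1 / ε) * ∫ w, ∫ w₁, (φ (w + ξ * P w w₁ * (w₁ - w)) - φ w) ∂(fS t + fI t) ∂(fS t))
      (Ici 0) t ∧
    HasDerivWithinAt (fun s => ∫ w, φ w ∂(fI s))
      ((1 / ε) * ∫ w, ∫ w₁, (φ (w + ξ * P w w₁ * (w₁ - w)) - φ w) ∂(fS t + fI t) ∂(fI t))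
      (Ici 0) t

/- ### Auxiliary lemmas -/

section Aux

open Function

lemma ae_mem_Icc {μ : Measure ℝ} (h : SuppIcc μ) : ∀ᵐ w ∂μ, w ∈ Icc (-1:ℝ) 1 := by
  rw [ae_iff]
  exact h

lemma integrable_of_suppIcc {μ : Measure ℝ} [IsFiniteMeasure μ] (h : SuppIcc μ)
    {φ : ℝ → ℝ} (hφ : Continuous φ) : Integrable φ μ := by
  obtain ⟨B, hB⟩ := (isCompact_Icc (a := (-1:ℝ)) (b := 1)).exists_bound_of_continuousOn
    hφ.continuousOn
  refine Integrable.mono' (integrable_const B) hφ.aestronglyMeasurable ?_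
  filter_upwards [ae_mem_Icc h] with w hw using hB w hw

lemma suppIcc_add {μ ν : Measure ℝ} (hμ : SuppIcc μ) (hν : SuppIcc ν) : SuppIcc (μ + ν) := by
  simp [SuppIcc] at *; simp [hμ, hν]

lemma prod_null {μ ν : Measure ℝ} [SFinite ν] (hμ : SuppIcc μ) (hν : SuppIcc ν) :
    (μ.prod ν) ((Icc (-1:ℝ) 1 ×ˢ Icc (-1:ℝ) 1)ᶜ) = 0 := by
  have hsub : (Icc (-1:ℝ) 1 ×ˢ Icc (-1:ℝ) 1)ᶜ ⊆
      ((Icc (-1:ℝ) 1)ᶜ ×ˢ (univ : Set ℝ)) ∪ ((univ : Set ℝ) ×ˢ (Icc (-1:ℝ) 1)ᶜ) := by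
    rintro ⟨x, y⟩ hxy
    simp only [mem_compl_iff, mem_prod, not_and_or] at hxy
    rcases hxy with h | h <;> simp [h]
  refine measure_mono_null hsub ?_
  refine le_antisymm ?_ zero_le
  refine le_trans (measure_union_le _ _) ?_
  rw [Measure.prod_prod, Measure.prod_prod, hμ, hν]
  simp

lemma ae_prod_mem {μ ν : Measure ℝ} [SFinite ν] (hμ : SuppIcc μ) (hν : SuppIcc ν) :
    ∀ᵐ p ∂(μ.prod ν), p.1 ∈ Icc (-1:ℝ) 1 ∧ p.2 ∈ Icc (-1:ℝ) 1 := by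
  rw [ae_iff]
  refine measure_mono_null ?_ (prod_null hμ hν)
  intro p hp
  exact fun hmem => hp ⟨hmem.1, hmem.2⟩

lemma integrable_uncurry {μ ν : Measure ℝ} [IsFiniteMeasure μ] [IsFiniteMeasure ν]
    (hμ : SuppIcc μ) (hν : SuppIcc ν) {F : ℝ → ℝ → ℝ} (hF : Continuous (uncurry F)) :
    Integrable (uncurry F) (μ.prod ν) := by
  obtain ⟨B, hB⟩ := ((isCompact_Icc (a := (-1:ℝ)) (b := 1)).prod
    (isCompact_Icc (a := (-1:ℝ)) (b := 1))).exists_bound_of_continuousOn hF.continuousOn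
  refine Integrable.mono' (integrable_const B) hF.aestronglyMeasurable ?_
  filter_upwards [ae_prod_mem hμ hν] with p hp using hB p ⟨hp.1, hp.2⟩

lemma integrable_inner {μ ν : Measure ℝ} [IsFiniteMeasure μ] [IsFiniteMeasure ν]
    (hμ : SuppIcc μ) (hν : SuppIcc ν) {F : ℝ → ℝ → ℝ} (hF : Continuous (uncurry F)) :
    Integrable (fun w => ∫ w₁, F w w₁ ∂ν) μ := by
  obtain ⟨B, hB⟩ := ((isCompact_Icc (a := (-1:ℝ)) (b := 1)).prod
    (isCompact_Icc (a := (-1:ℝ)) (b := 1))).exists_bound_of_continuousOn hF.continuousOn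
  have hBnn : 0 ≤ B := le_trans (norm_nonneg _)
    (hB ((0:ℝ),(0:ℝ)) (by constructor <;> constructor <;> norm_num))
  refine Integrable.mono' (integrable_const (B * (ν univ).toReal))
    (hF.stronglyMeasurable.integral_prod_right).aestronglyMeasurable ?_
  filter_upwards [ae_mem_Icc hμ] with w hw
  calc ‖∫ w₁, F w w₁ ∂ν‖ ≤ ∫ w₁, ‖F w w₁‖ ∂ν := norm_integral_le_integral_norm _
    _ ≤ ∫ _, B ∂ν := by
        have hFw : Continuous (F w) := hF.comp (Continuous.prodMk_right w)
        refine integral_mono_ae (integrable_of_suppIcc hν hFw).norm (integrable_const B) ?_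
        filter_upwards [ae_mem_Icc hν] with w₁ hw₁ using hB (w, w₁) ⟨hw, hw₁⟩
    _ = B * (ν univ).toReal := by simp [integral_const, smul_eq_mul, mul_comm, measureReal_def]

lemma swapIccIntegral {f : Measure ℝ} [IsFiniteMeasure f] (hf : SuppIcc f)
    {F : ℝ → ℝ → ℝ} (hF : Continuous (uncurry F)) :
    ∫ w, ∫ w₁, F w w₁ ∂f ∂f = ∫ w, ∫ w₁, F w₁ w ∂f ∂f :=
  integral_integral_swap (integrable_uncurry hf hf hF)

lemma const_of_hasDerivWithinAt_zero {g : ℝ → ℝ}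
    (h : ∀ t ∈ Ici (0:ℝ), HasDerivWithinAt g 0 (Ici 0) t) :
    ∀ t ∈ Ici (0:ℝ), g t = g 0 := by
  intro t ht
  refine constant_of_has_deriv_right_zero (f := g) (a := 0) (b := t) ?_ ?_ t ?_
  · intro x hx
    exact ((h x hx.1).continuousWithinAt).mono (fun y hy => hy.1)
  · intro x hx
    exact (h x hx.1).mono (fun y hy => le_trans hx.1 hy)
  · exact ⟨ht, le_refl t⟩

lemma exp_decay_of_deriv {V D : ℝ → ℝ} {K : ℝ}
    (hd : ∀ t ∈ Ici (0:ℝ), HasDerivWithinAt V (D t) (Ici 0) t)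
    (hD : ∀ t ∈ Ici (0:ℝ), D t ≤ -K * V t) :
    ∀ t ∈ Ici (0:ℝ), V t ≤ V 0 * Real.exp (-K * t) := by
  intro t ht
  set g : ℝ → ℝ := fun s => V s * Real.exp (K * s) with hg
  have hgderiv : ∀ s ∈ Ici (0:ℝ),
      HasDerivWithinAt g (D s * Real.exp (K * s) + V s * (K * Real.exp (K * s))) (Ici 0) s := by
    intro s hs
    have he : HasDerivWithinAt (fun s => Real.exp (K * s)) (K * Real.exp (K * s)) (Ici 0) s := by
      have := ((hasDerivAt_id s).const_mul K).exp
      simpa [mul_comm] using this.hasDerivWithinAt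
    exact (hd s hs).mul he
  have hanti : AntitoneOn g (Ici 0) := by
    refine antitoneOn_of_hasDerivWithinAt_nonpos (convex_Ici 0) ?_
      (f' := fun s => D s * Real.exp (K * s) + V s * (K * Real.exp (K * s))) ?_ ?_
    · intro x hx; exact (hgderiv x hx).continuousWithinAt
    · intro x hx
      rw [interior_Ici] at hx ⊢
      exact (hgderiv x (mem_Ici.mpr (le_of_lt (mem_Ioi.mp hx)))).mono Ioi_subset_Ici_self
    · intro x hx
      rw [interior_Ici] at hx
      have h1 := hD x (mem_Ici.mpr (le_of_lt (mem_Ioi.mp hx)))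
      have h2 : D x * Real.exp (K * x) ≤ (-K * V x) * Real.exp (K * x) :=
        mul_le_mul_of_nonneg_right h1 (Real.exp_pos (K*x)).le
      show D x * Real.exp (K * x) + V x * (K * Real.exp (K * x)) ≤ 0
      nlinarith [h2]
  have hgle : g t ≤ g 0 := hanti (self_mem_Ici) ht ht
  have : V t * Real.exp (K * t) ≤ V 0 := by simpa [hg] using hgle
  have hpos := Real.exp_pos (K * t)
  rw [neg_mul, Real.exp_neg, ← div_eq_mul_inv, le_div_iff₀ hpos]
  exact this

lemma Gcont {ξ : ℝ} {P : ℝ → ℝ → ℝ} (hP : Continuous (uncurry P)) (φ : C(ℝ, ℝ)) :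
    Continuous (uncurry (fun w w₁ => φ (w + ξ * P w w₁ * (w₁ - w)) - φ w)) := by
  have hPc : Continuous (fun p : ℝ × ℝ => P p.1 p.2) := hP
  show Continuous fun p : ℝ × ℝ => φ (p.1 + ξ * P p.1 p.2 * (p.2 - p.1)) - φ p.1
  exact (φ.continuous.comp (continuous_fst.add
    (((continuous_const.mul hPc).mul (continuous_snd.sub continuous_fst))))).sub
    (φ.continuous.comp continuous_fst)

lemma hasDeriv_total {ε ξ : ℝ} {P : ℝ → ℝ → ℝ} (hP : Continuous (uncurry P))
    {fS fI : ℝ → Measure ℝ}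
    (hreg : ∀ t ∈ Ici (0 : ℝ), IsFiniteMeasure (fS t) ∧ IsFiniteMeasure (fI t) ∧
      SuppIcc (fS t) ∧ SuppIcc (fI t))
    (hsol : SolvesPureSocial ε ξ P fS fI) (φ : C(ℝ, ℝ)) {t : ℝ} (ht : t ∈ Ici (0:ℝ)) :
    HasDerivWithinAt (fun s => (∫ w, φ w ∂(fS s)) + (∫ w, φ w ∂(fI s)))
      ((1 / ε) * ∫ w, ∫ w₁, (φ (w + ξ * P w w₁ * (w₁ - w)) - φ w)
        ∂(fS t + fI t) ∂(fS t + fI t))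
      (Ici 0) t := by
  obtain ⟨hfS, hfI, hsS, hsI⟩ := hreg t ht
  haveI := hfS; haveI := hfI
  have hsf : SuppIcc (fS t + fI t) := suppIcc_add hsS hsI
  have hG := Gcont (ξ := ξ) hP φ
  have h1 : Integrable (fun w => ∫ w₁, (φ (w + ξ * P w w₁ * (w₁ - w)) - φ w) ∂(fS t + fI t))
      (fS t) := integrable_inner hsS hsf hG
  have h2 : Integrable (fun w => ∫ w₁, (φ (w + ξ * P w w₁ * (w₁ - w)) - φ w) ∂(fS t + fI t))
      (fI t) := integrable_inner hsI hsf hG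
  have hadd := ((hsol φ t ht).1).add ((hsol φ t ht).2)
  rw [integral_add_measure h1 h2, mul_add]
  exact hadd

lemma integral_sq_sub {ν : Measure ℝ} [IsFiniteMeasure ν] (hν : SuppIcc ν) (c : ℝ) :
    ∫ w, (w - c) ^ 2 ∂ν
      = (∫ u, u ^ 2 ∂ν) - 2 * c * (∫ u, u ∂ν) + c ^ 2 * (ν univ).toReal := by
  have h2 : Integrable (fun w : ℝ => w ^ 2) ν := integrable_of_suppIcc hν (continuous_pow 2)
  have h1 : Integrable (fun w : ℝ => w) ν := integrable_of_suppIcc hν continuous_id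
  have e0 : ∫ w, (w - c) ^ 2 ∂ν = ∫ w, ((w ^ 2 - (2 * c) * w) + c ^ 2) ∂ν :=
    integral_congr_ae (Eventually.of_forall fun w => by ring)
  have e1 : ∫ w, ((w ^ 2 - (2 * c) * w) + c ^ 2) ∂ν
      = (∫ w, (w ^ 2 - (2 * c) * w) ∂ν) + ∫ _, c ^ 2 ∂ν :=
    integral_add (h2.sub (h1.const_mul _)) (integrable_const _)
  have e2 : ∫ w, (w ^ 2 - (2 * c) * w) ∂ν = (∫ w, w ^ 2 ∂ν) - ∫ w, (2 * c) * w ∂ν :=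
    integral_sub h2 (h1.const_mul _)
  have e3 : ∫ w, (2 * c) * w ∂ν = (2 * c) * ∫ w, w ∂ν := integral_const_mul _ _
  rw [e0, e1, e2, e3, integral_const, smul_eq_mul, measureReal_def]
  ring

lemma integral_quad_aux {ν : Measure ℝ} [IsFiniteMeasure ν] (hν : SuppIcc ν) (A c : ℝ) :
    ∫ w, (A - 2 * w * c + w ^ 2) ∂ν
      = A * (ν univ).toReal - 2 * c * (∫ u, u ∂ν) + ∫ u, u ^ 2 ∂ν := by
  have h2 : Integrable (fun w : ℝ => w ^ 2) ν := integrable_of_suppIcc hν (continuous_pow 2)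
  have h1 : Integrable (fun w : ℝ => w) ν := integrable_of_suppIcc hν continuous_id
  have e0 : ∫ w, (A - 2 * w * c + w ^ 2) ∂ν = ∫ w, ((w ^ 2 - (2 * c) * w) + A) ∂ν :=
    integral_congr_ae (Eventually.of_forall fun w => by ring)
  have e1 : ∫ w, ((w ^ 2 - (2 * c) * w) + A) ∂ν
      = (∫ w, (w ^ 2 - (2 * c) * w) ∂ν) + ∫ _, A ∂ν :=
    integral_add (h2.sub (h1.const_mul _)) (integrable_const _)
  have e2 : ∫ w, (w ^ 2 - (2 * c) * w) ∂ν = (∫ w, w ^ 2 ∂ν) - ∫ w, (2 * c) * w ∂ν :=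
    integral_sub h2 (h1.const_mul _)
  have e3 : ∫ w, (2 * c) * w ∂ν = (2 * c) * ∫ w, w ∂ν := integral_const_mul _ _
  rw [e0, e1, e2, e3, integral_const, smul_eq_mul, measureReal_def]
  ring

end Aux

set_option maxHeartbeats 1000000 in
/-- **Convergence to consensus.** If `P` is continuous, bounded, symmetric and positive on
`[-1,1]²` and `0 < ξ < 1/‖P‖_∞`, then `fI_t → ρ^I δ_{⟨w⟩}` and `fS_t → ρ^S δ_{⟨w⟩}` weakly
as `t → ∞`, and the variance of `f_t = fS_t + fI_t` decays exponentially: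
`Var[f_t] ≤ Var[f_0] e^{-Ct/ε}` for some `C > 0`. -/
theorem consensus_pure_social
    (ε ξ : ℝ) (hε : 0 < ε) (hξpos : 0 < ξ)
    (P : ℝ → ℝ → ℝ)
    (hPcont : Continuous (Function.uncurry P))
    (hPsymm : ∀ w ∈ Icc (-1 : ℝ) 1, ∀ w₁ ∈ Icc (-1 : ℝ) 1, P w w₁ = P w₁ w)
    (hPpos : ∀ w ∈ Icc (-1 : ℝ) 1, ∀ w₁ ∈ Icc (-1 : ℝ) 1, 0 < P w w₁)
    (hξ : ξ < 1 / sSup (Set.image2 P (Icc (-1 : ℝ) 1) (Icc (-1 : ℝ) 1)))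
    (fS fI : ℝ → Measure ℝ)
    (hreg : ∀ t ∈ Ici (0 : ℝ), IsFiniteMeasure (fS t) ∧ IsFiniteMeasure (fI t) ∧
      SuppIcc (fS t) ∧ SuppIcc (fI t))
    (h0 : IsProbabilityMeasure (fS 0 + fI 0))
    (hsol : SolvesPureSocial ε ξ P fS fI) :
    (∀ φ : C(ℝ, ℝ),
      Tendsto (fun t => ∫ w, φ w ∂(fI t)) atTop
        (nhds (((fI 0) univ).toReal * φ (∫ w, w ∂(fS 0 + fI 0))))) ∧
    (∀ φ : C(ℝ, ℝ),
      Tendsto (fun t => ∫ w, φ w ∂(fS t)) atTop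
        (nhds (((fS 0) univ).toReal * φ (∫ w, w ∂(fS 0 + fI 0))))) ∧
    (∃ C > 0, ∀ t ∈ Ici (0 : ℝ),
      var (fS t + fI t) ≤ var (fS 0 + fI 0) * Real.exp (-C * t / ε)) := by
  classical
  -- ### constants
  have hcomp : IsCompact (Set.image2 P (Icc (-1:ℝ) 1) (Icc (-1:ℝ) 1)) := by
    rw [← Set.image_uncurry_prod]
    exact (isCompact_Icc.prod isCompact_Icc).image hPcont
  have hne : (Set.image2 P (Icc (-1:ℝ) 1) (Icc (-1:ℝ) 1)).Nonempty :=
    ⟨P 0 0, Set.mem_image2_of_mem (by norm_num) (by norm_num)⟩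
  set K := sSup (Set.image2 P (Icc (-1:ℝ) 1) (Icc (-1:ℝ) 1)) with hKdef
  set p := sInf (Set.image2 P (Icc (-1:ℝ) 1) (Icc (-1:ℝ) 1)) with hpdef
  have hppos : 0 < p := by
    obtain ⟨a, ha, b, hb, hab⟩ := hcomp.sInf_mem hne
    rw [hpdef, ← hab]
    exact hPpos a ha b hb
  have hPle : ∀ w ∈ Icc (-1:ℝ) 1, ∀ w₁ ∈ Icc (-1:ℝ) 1, P w w₁ ≤ K := fun w hw w₁ hw₁ =>
    le_csSup hcomp.bddAbove (Set.mem_image2_of_mem hw hw₁)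
  have hpleP : ∀ w ∈ Icc (-1:ℝ) 1, ∀ w₁ ∈ Icc (-1:ℝ) 1, p ≤ P w w₁ := fun w hw w₁ hw₁ =>
    csInf_le hcomp.bddBelow (Set.mem_image2_of_mem hw hw₁)
  have hKpos : 0 < K := lt_of_lt_of_le (hPpos 0 (by norm_num) 0 (by norm_num))
    (hPle 0 (by norm_num) 0 (by norm_num))
  have hξK : ξ * K < 1 := (lt_div_iff₀ hKpos).mp hξ
  -- ### mass conservation
  have hmassS : ∀ t ∈ Ici (0:ℝ), ((fS t) univ).toReal = ((fS 0) univ).toReal := by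
    refine const_of_hasDerivWithinAt_zero (g := fun t => ((fS t) univ).toReal) ?_
    intro t ht
    have h := (hsol (ContinuousMap.const ℝ 1) t ht).1
    simpa [measureReal_def] using h
  have hmassI : ∀ t ∈ Ici (0:ℝ), ((fI t) univ).toReal = ((fI 0) univ).toReal := by
    refine const_of_hasDerivWithinAt_zero (g := fun t => ((fI t) univ).toReal) ?_
    intro t ht
    have h := (hsol (ContinuousMap.const ℝ 1) t ht).2
    simpa [measureReal_def] using h
  have hmassT : ∀ t ∈ Ici (0:ℝ), ((fS t + fI t) univ).toReal = 1 := by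
    intro t ht
    have hfS := (hreg t ht).1; have hfI := (hreg t ht).2.1
    haveI := hfS; haveI := hfI
    have hfS0 := (hreg 0 Set.self_mem_Ici).1; have hfI0 := (hreg 0 Set.self_mem_Ici).2.1
    haveI := hfS0; haveI := hfI0
    have h1 : ((fS t + fI t) univ).toReal = ((fS t) univ).toReal + ((fI t) univ).toReal := by
      rw [Measure.add_apply, ENNReal.toReal_add (measure_ne_top _ _) (measure_ne_top _ _)]
    have h2 : ((fS 0 + fI 0) univ).toReal = ((fS 0) univ).toReal + ((fI 0) univ).toReal := by
      rw [Measure.add_apply, ENNReal.toReal_add (measure_ne_top _ _) (measure_ne_top _ _)]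
    have h3 : ((fS 0 + fI 0) univ).toReal = 1 := by rw [measure_univ]; simp
    rw [h1, hmassS t ht, hmassI t ht, ← h2, h3]
  -- ### mean conservation
  set m := ∫ w, w ∂(fS 0 + fI 0) with hm
  have hMzero : ∀ t ∈ Ici (0:ℝ),
      HasDerivWithinAt (fun s => (∫ w, w ∂(fS s)) + ∫ w, w ∂(fI s)) 0 (Ici 0) t := by
    intro t ht
    have h := hasDeriv_total hPcont hreg hsol (ContinuousMap.id ℝ) ht
    simp only [ContinuousMap.id_apply, add_sub_cancel_left] at h
    obtain ⟨hfS, hfI, hsS, hsI⟩ := hreg t ht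
    haveI := hfS; haveI := hfI
    have hsf := suppIcc_add hsS hsI
    have hFc : Continuous (Function.uncurry fun w w₁ => ξ * P w w₁ * (w₁ - w)) := by
      have hPc : Continuous (fun q : ℝ × ℝ => P q.1 q.2) := hPcont
      show Continuous fun q : ℝ × ℝ => ξ * P q.1 q.2 * (q.2 - q.1)
      exact (continuous_const.mul hPc).mul (continuous_snd.sub continuous_fst)
    have hswap := swapIccIntegral (f := fS t + fI t) hsf hFc
    have hneg : ∫ w, ∫ w₁, ξ * P w₁ w * (w - w₁) ∂(fS t + fI t) ∂(fS t + fI t)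
        = - ∫ w, ∫ w₁, ξ * P w w₁ * (w₁ - w) ∂(fS t + fI t) ∂(fS t + fI t) := by
      rw [← integral_neg]
      refine integral_congr_ae ?_
      filter_upwards [ae_mem_Icc hsf] with w hw
      rw [← integral_neg]
      refine integral_congr_ae ?_
      filter_upwards [ae_mem_Icc hsf] with w₁ hw₁
      rw [hPsymm w₁ hw₁ w hw]
      ring
    have hzero : ∫ w, ∫ w₁, ξ * P w w₁ * (w₁ - w) ∂(fS t + fI t) ∂(fS t + fI t) = 0 := by
      have h2 := hswap.trans hneg
      linarith
    rw [hzero, mul_zero] at h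
    exact h
  have hMconst := const_of_hasDerivWithinAt_zero hMzero
  have hidc : Continuous (fun w : ℝ => w) := continuous_id
  have hMt : ∀ t ∈ Ici (0:ℝ), ∫ w, w ∂(fS t + fI t) = m := by
    intro t ht
    obtain ⟨hfS, hfI, hsS, hsI⟩ := hreg t ht
    haveI := hfS; haveI := hfI
    obtain ⟨hfS0, hfI0, hsS0, hsI0⟩ := hreg 0 Set.self_mem_Ici
    haveI := hfS0; haveI := hfI0
    rw [integral_add_measure (integrable_of_suppIcc hsS hidc)
      (integrable_of_suppIcc hsI hidc), hMconst t ht, hm,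
      integral_add_measure (integrable_of_suppIcc hsS0 hidc)
      (integrable_of_suppIcc hsI0 hidc)]
  -- ### second moment
  set φsq : C(ℝ, ℝ) := ⟨fun w => w ^ 2, continuous_pow 2⟩ with hφsq
  set S2 : ℝ → ℝ := fun s => (∫ w, w ^ 2 ∂(fS s)) + ∫ w, w ^ 2 ∂(fI s) with hS2
  set D2 : ℝ → ℝ := fun t => (1 / ε) *
    ∫ w, ∫ w₁, ((w + ξ * P w w₁ * (w₁ - w)) ^ 2 - w ^ 2) ∂(fS t + fI t) ∂(fS t + fI t) with hD2
  have hS2deriv : ∀ t ∈ Ici (0:ℝ), HasDerivWithinAt S2 (D2 t) (Ici 0) t := by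
    intro t ht
    have h := hasDeriv_total hPcont hreg hsol φsq ht
    simp only [hφsq, ContinuousMap.coe_mk] at h
    exact h
  set Creal := 2 * ξ * p * (1 - ξ * K) with hCreal
  have hCrealpos : 0 < Creal := by
    have h1 : 0 < 1 - ξ * K := by linarith
    rw [hCreal]; positivity
  have hD2le : ∀ t ∈ Ici (0:ℝ), D2 t ≤ -(Creal / ε) * (S2 t - m ^ 2) := by
    intro t ht
    obtain ⟨hfS, hfI, hsS, hsI⟩ := hreg t ht
    haveI := hfS; haveI := hfI
    have hsf := suppIcc_add hsS hsI
    set ν := fS t + fI t with hν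
    set G : ℝ → ℝ → ℝ := fun w w₁ => (w + ξ * P w w₁ * (w₁ - w)) ^ 2 - w ^ 2 with hG
    have hGc : Continuous (Function.uncurry G) := by
      have hPc : Continuous (fun q : ℝ × ℝ => P q.1 q.2) := hPcont
      show Continuous fun q : ℝ × ℝ => (q.1 + ξ * P q.1 q.2 * (q.2 - q.1)) ^ 2 - q.1 ^ 2
      have h1 : Continuous fun q : ℝ × ℝ => q.1 + ξ * P q.1 q.2 * (q.2 - q.1) :=
        continuous_fst.add ((continuous_const.mul hPc).mul (continuous_snd.sub continuous_fst))
      exact (h1.pow 2).sub (continuous_fst.pow 2)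
    have hGc' : Continuous (Function.uncurry fun w w₁ => G w₁ w) := by
      show Continuous ((Function.uncurry G) ∘ Prod.swap)
      exact hGc.comp continuous_swap
    have hGw : ∀ w : ℝ, Continuous (fun w₁ => G w w₁) := fun w =>
      hGc.comp (Continuous.prodMk_right w)
    have hGw' : ∀ w : ℝ, Continuous (fun w₁ => G w₁ w) := fun w =>
      hGc.comp (continuous_id.prodMk continuous_const)
    have hsum_c : Continuous (Function.uncurry fun w w₁ => G w w₁ + G w₁ w) := by
      show Continuous fun q : ℝ × ℝ => (Function.uncurry G) q + (Function.uncurry G) q.swap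
      exact hGc.add (hGc.comp continuous_swap)
    have hRHSc : Continuous (Function.uncurry fun w w₁ : ℝ => -Creal * (w₁ - w) ^ 2) := by
      show Continuous fun q : ℝ × ℝ => -Creal * (q.2 - q.1) ^ 2
      exact continuous_const.mul ((continuous_snd.sub continuous_fst).pow 2)
    have hswap := swapIccIntegral (f := ν) hsf hGc
    have hEE : (∫ w, ∫ w₁, G w w₁ ∂ν ∂ν) + (∫ w, ∫ w₁, G w₁ w ∂ν ∂ν)
        = ∫ w, ∫ w₁, (G w w₁ + G w₁ w) ∂ν ∂ν := by
      have hptw : (fun w => ∫ w₁, (G w w₁ + G w₁ w) ∂ν)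
          = fun w => (∫ w₁, G w w₁ ∂ν) + ∫ w₁, G w₁ w ∂ν := by
        funext w
        exact integral_add (integrable_of_suppIcc hsf (hGw w))
          (integrable_of_suppIcc hsf (hGw' w))
      have houter : ∫ w, ((∫ w₁, G w w₁ ∂ν) + ∫ w₁, G w₁ w ∂ν) ∂ν
          = (∫ w, ∫ w₁, G w w₁ ∂ν ∂ν) + (∫ w, ∫ w₁, G w₁ w ∂ν ∂ν) :=
        integral_add (integrable_inner hsf hsf hGc) (integrable_inner hsf hsf hGc')
      rw [show (∫ w, ∫ w₁, (G w w₁ + G w₁ w) ∂ν ∂ν)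
          = ∫ w, ((∫ w₁, G w w₁ ∂ν) + ∫ w₁, G w₁ w ∂ν) ∂ν from congrArg _ hptw, houter]
    have hmono : ∫ w, ∫ w₁, (G w w₁ + G w₁ w) ∂ν ∂ν
        ≤ ∫ w, ∫ w₁, (-Creal * (w₁ - w) ^ 2) ∂ν ∂ν := by
      refine integral_mono_ae (integrable_inner hsf hsf hsum_c)
        (integrable_inner hsf hsf hRHSc) ?_
      filter_upwards [ae_mem_Icc hsf] with w hw
      refine integral_mono_ae
        (integrable_of_suppIcc hsf ((hGw w).add (hGw' w)))
        (integrable_of_suppIcc hsf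
          (continuous_const.mul ((continuous_id.sub continuous_const).pow 2))) ?_
      filter_upwards [ae_mem_Icc hsf] with w₁ hw₁
      have hsymm := hPsymm w hw w₁ hw₁
      have h1 := hpleP w hw w₁ hw₁
      have h2 := hPle w hw w₁ hw₁
      have h0 := hPpos w hw w₁ hw₁
      have hid : G w w₁ + G w₁ w
          = -2 * (ξ * P w w₁) * (1 - ξ * P w w₁) * (w₁ - w) ^ 2 := by
        simp only [hG]
        rw [← hsymm]
        ring
      rw [hid, hCreal]
      nlinarith [sq_nonneg (w₁ - w),
        mul_nonneg (mul_nonneg (mul_nonneg hξpos.le (sub_nonneg.2 h1))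
          (by linarith : (0:ℝ) ≤ 1 - ξ * K)) (sq_nonneg (w₁ - w)),
        mul_nonneg (mul_nonneg (mul_nonneg (mul_nonneg hξpos.le hξpos.le)
          (sub_nonneg.2 h2)) h0.le) (sq_nonneg (w₁ - w))]
    have hmean : ∫ w, w ∂ν = m := hMt t ht
    have hmass1 : (ν univ).toReal = 1 := hmassT t ht
    have hw2int : Integrable (fun w : ℝ => w ^ 2) ν := integrable_of_suppIcc hsf (continuous_pow 2)
    have hwint : Integrable (fun w : ℝ => w) ν := integrable_of_suppIcc hsf hidc
    have hinner : ∀ w : ℝ, ∫ w₁, (w₁ - w) ^ 2 ∂ν = (∫ u, u ^ 2 ∂ν) - 2 * w * m + w ^ 2 := by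
      intro w
      rw [integral_sq_sub hsf w, hmean, hmass1]
      ring
    have hQ : ∫ w, ∫ w₁, (-Creal * (w₁ - w) ^ 2) ∂ν ∂ν
        = -Creal * (2 * (∫ u, u ^ 2 ∂ν) - 2 * m ^ 2) := by
      have h1 : ∀ w : ℝ, ∫ w₁, (-Creal * (w₁ - w) ^ 2) ∂ν
          = -Creal * ((∫ u, u ^ 2 ∂ν) - 2 * w * m + w ^ 2) := by
        intro w
        rw [integral_const_mul, hinner w]
      rw [integral_congr_ae (Eventually.of_forall h1), integral_const_mul]
      have h2 : ∫ w, ((∫ u, u ^ 2 ∂ν) - 2 * w * m + w ^ 2) ∂ν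
          = 2 * (∫ u, u ^ 2 ∂ν) - 2 * m ^ 2 := by
        rw [integral_quad_aux hsf _ m, hmean, hmass1]
        ring
      rw [h2]
    have hS2t : S2 t = ∫ u, u ^ 2 ∂ν := by
      rw [hν, integral_add_measure (integrable_of_suppIcc hsS (continuous_pow 2))
        (integrable_of_suppIcc hsI (continuous_pow 2))]
    have hE : (∫ w, ∫ w₁, G w w₁ ∂ν ∂ν) ≤ -Creal * (S2 t - m ^ 2) := by
      have h1 : 2 * (∫ w, ∫ w₁, G w w₁ ∂ν ∂ν)
          ≤ -Creal * (2 * (∫ u, u ^ 2 ∂ν) - 2 * m ^ 2) := by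
        calc 2 * (∫ w, ∫ w₁, G w w₁ ∂ν ∂ν)
            = (∫ w, ∫ w₁, G w w₁ ∂ν ∂ν) + (∫ w, ∫ w₁, G w₁ w ∂ν ∂ν) := by
              rw [← hswap]; ring
          _ = ∫ w, ∫ w₁, (G w w₁ + G w₁ w) ∂ν ∂ν := hEE
          _ ≤ ∫ w, ∫ w₁, (-Creal * (w₁ - w) ^ 2) ∂ν ∂ν := hmono
          _ = -Creal * (2 * (∫ u, u ^ 2 ∂ν) - 2 * m ^ 2) := hQ
      rw [hS2t]
      linarith
    show (1 / ε) * (∫ w, ∫ w₁, G w w₁ ∂ν ∂ν) ≤ -(Creal / ε) * (S2 t - m ^ 2)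
    have h3 : (1 / ε) * (∫ w, ∫ w₁, G w w₁ ∂ν ∂ν) ≤ (1 / ε) * (-Creal * (S2 t - m ^ 2)) :=
      mul_le_mul_of_nonneg_left hE (by positivity)
    calc (1 / ε) * (∫ w, ∫ w₁, G w w₁ ∂ν ∂ν) ≤ (1 / ε) * (-Creal * (S2 t - m ^ 2)) := h3
      _ = -(Creal / ε) * (S2 t - m ^ 2) := by ring
  -- ### variance decay
  set Vfn : ℝ → ℝ := fun s => S2 s - m ^ 2 with hVfn
  have hVderiv : ∀ t ∈ Ici (0:ℝ), HasDerivWithinAt Vfn (D2 t) (Ici 0) t := fun t ht =>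
    (hS2deriv t ht).sub_const _
  have hVle := exp_decay_of_deriv (K := Creal / ε) hVderiv (fun t ht => hD2le t ht)
  have hvar : ∀ t ∈ Ici (0:ℝ), var (fS t + fI t) = Vfn t := by
    intro t ht
    obtain ⟨hfS, hfI, hsS, hsI⟩ := hreg t ht
    haveI := hfS; haveI := hfI
    rw [var, hMt t ht, integral_add_measure (integrable_of_suppIcc hsS (continuous_pow 2))
      (integrable_of_suppIcc hsI (continuous_pow 2))]
  -- ### weak convergence setup
  have hWeq : ∀ t ∈ Ici (0:ℝ), ∫ w, (w - m) ^ 2 ∂(fS t + fI t) = Vfn t := by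
    intro t ht
    obtain ⟨hfS, hfI, hsS, hsI⟩ := hreg t ht
    haveI := hfS; haveI := hfI
    have hsf := suppIcc_add hsS hsI
    have hS2t : S2 t = ∫ u, u ^ 2 ∂(fS t + fI t) := by
      rw [hS2]
      exact (integral_add_measure (integrable_of_suppIcc hsS (continuous_pow 2))
        (integrable_of_suppIcc hsI (continuous_pow 2))).symm
    rw [integral_sq_sub hsf m, hMt t ht, hmassT t ht, hVfn]
    simp only []
    rw [hS2t]
    ring
  have hWnn : ∀ t ∈ Ici (0:ℝ), 0 ≤ Vfn t := by
    intro t ht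
    rw [← hWeq t ht]
    exact integral_nonneg fun w => sq_nonneg _
  have hVtend : Tendsto Vfn atTop (nhds 0) := by
    have hKpos' : 0 < Creal / ε := div_pos hCrealpos hε
    have hexp : Tendsto (fun t : ℝ => Vfn 0 * Real.exp (-(Creal / ε) * t)) atTop (nhds 0) := by
      have h1 : Tendsto (fun t : ℝ => -(Creal / ε) * t) atTop atBot := by
        have h0' : Tendsto (fun x : ℝ => (Creal / ε) * x) atTop atTop :=
          tendsto_id.const_mul_atTop hKpos'
        exact (tendsto_neg_atTop_atBot.comp h0').congr fun x => (neg_mul _ _).symm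
      have h2 := (Real.tendsto_exp_atBot.comp h1).const_mul (Vfn 0)
      simpa [Function.comp] using h2
    refine squeeze_zero' ?_ ?_ hexp
    · filter_upwards [eventually_ge_atTop (0:ℝ)] with t ht using hWnn t ht
    · filter_upwards [eventually_ge_atTop (0:ℝ)] with t ht using hVle t ht
  have hmIcc : m ∈ Icc (-1:ℝ) 1 := by
    obtain ⟨hfS0, hfI0, hsS0, hsI0⟩ := hreg 0 Set.self_mem_Ici
    haveI := hfS0; haveI := hfI0
    have hsf0 := suppIcc_add hsS0 hsI0
    have habs : |m| ≤ 1 := by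
      rw [hm]
      calc |∫ w, w ∂(fS 0 + fI 0)| ≤ ∫ w, |w| ∂(fS 0 + fI 0) := by
            simpa [Real.norm_eq_abs] using
              norm_integral_le_integral_norm (μ := fS 0 + fI 0) (f := fun w : ℝ => w)
        _ ≤ ∫ _, (1:ℝ) ∂(fS 0 + fI 0) := by
            refine integral_mono_ae (integrable_of_suppIcc hsf0 hidc).abs
              (integrable_const _) ?_
            filter_upwards [ae_mem_Icc hsf0] with w hw
            exact abs_le.mpr ⟨hw.1, hw.2⟩
        _ = 1 := by rw [integral_const, smul_eq_mul, measureReal_def, hmassT 0 Set.self_mem_Ici, one_mul]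
    exact ⟨neg_le_of_abs_le habs, le_of_abs_le habs⟩
  -- ### the key weak convergence argument
  have key : ∀ g : ℝ → Measure ℝ,
      (∀ t ∈ Ici (0:ℝ), IsFiniteMeasure (g t) ∧ SuppIcc (g t) ∧ g t ≤ fS t + fI t ∧
        ((g t) univ).toReal = ((g 0) univ).toReal) →
      ∀ φ : C(ℝ, ℝ), Tendsto (fun t => ∫ w, φ w ∂(g t)) atTop
        (nhds (((g 0) univ).toReal * φ m)) := by
    intro g hg φ
    set ρ : ℝ := ((g 0) univ).toReal with hρ
    have hρnn : 0 ≤ ρ := ENNReal.toReal_nonneg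
    have hρle : ρ ≤ 1 := by
      obtain ⟨hf0, _, hle0, _⟩ := hg 0 Set.self_mem_Ici
      have hfS0 := (hreg 0 Set.self_mem_Ici).1; have hfI0 := (hreg 0 Set.self_mem_Ici).2.1
      haveI := hfS0; haveI := hfI0
      calc ρ ≤ ((fS 0 + fI 0) univ).toReal :=
            ENNReal.toReal_mono (measure_ne_top _ _) (Measure.le_iff'.1 hle0 univ)
        _ = 1 := hmassT 0 Set.self_mem_Ici
    obtain ⟨B, hB⟩ := (isCompact_Icc (a := (-1:ℝ)) (b := 1)).exists_bound_of_continuousOn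
      φ.continuous.continuousOn
    have hBnn : 0 ≤ B := le_trans (norm_nonneg _) (hB 0 (by norm_num))
    rw [Metric.tendsto_atTop]
    intro ε' hε'
    obtain ⟨δ, hδpos, hδ⟩ := Metric.continuousAt_iff.1 (φ.continuous.continuousAt (x := m))
      (ε' / 4) (by linarith)
    have hcpos : 0 < (ε' / 8) * δ ^ 2 / (B + 1) := by positivity
    have hsmall : ∀ᶠ t in atTop, Vfn t < (ε' / 8) * δ ^ 2 / (B + 1) :=
      hVtend.eventually (eventually_lt_nhds hcpos)
    rw [eventually_atTop] at hsmall
    obtain ⟨N, hN⟩ := hsmall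
    refine ⟨max N 0, fun t htN => ?_⟩
    have ht0 : (0:ℝ) ≤ t := le_trans (le_max_right N 0) htN
    have hVs := hN t (le_trans (le_max_left N 0) htN)
    obtain ⟨hfin, hsupp, hle, hmassg⟩ := hg t ht0
    haveI := hfin
    obtain ⟨hfSt, hfIt, hsSt, hsIt⟩ := hreg t ht0
    haveI := hfSt; haveI := hfIt
    have hsft := suppIcc_add hsSt hsIt
    set s : Set ℝ := {w | δ ≤ |w - m|} with hset
    have hsmeas : MeasurableSet s := by
      have hseq : s = (fun w => |w - m|) ⁻¹' (Ici δ) := rfl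
      rw [hseq]
      exact ((continuous_id.sub continuous_const).abs).measurable measurableSet_Ici
    have hcheb : ((fS t + fI t) s).toReal ≤ Vfn t / δ ^ 2 := by
      have hmarkov := mul_meas_ge_le_integral_of_nonneg (μ := fS t + fI t)
        (f := fun w => (w - m) ^ 2) (Eventually.of_forall fun w => sq_nonneg _)
        (integrable_of_suppIcc hsft ((continuous_id.sub continuous_const).pow 2)) (δ ^ 2)
      rw [hWeq t ht0, measureReal_def] at hmarkov
      have hsub : s ⊆ {x | δ ^ 2 ≤ (x - m) ^ 2} := by
        intro x hx
        have hx' : δ ≤ |x - m| := hx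
        have : δ ^ 2 ≤ |x - m| ^ 2 := by nlinarith [abs_nonneg (x - m), hδpos.le]
        simpa [sq_abs] using this
      have hmono2 : ((fS t + fI t) s).toReal
          ≤ ((fS t + fI t) {x | δ ^ 2 ≤ (x - m) ^ 2}).toReal :=
        ENNReal.toReal_mono (measure_ne_top _ _) (measure_mono hsub)
      rw [le_div_iff₀ (pow_pos hδpos 2)]
      nlinarith [mul_le_mul_of_nonneg_right hmono2 (pow_pos hδpos 2).le]
    have hgs : ((g t) s).toReal ≤ Vfn t / δ ^ 2 :=
      le_trans (ENNReal.toReal_mono (measure_ne_top _ _) (Measure.le_iff'.1 hle s)) hcheb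
    have hgsnn : 0 ≤ ((g t) s).toReal := ENNReal.toReal_nonneg
    have hint : Integrable (fun w => φ w) (g t) := integrable_of_suppIcc hsupp φ.continuous
    have hρt : ((g t) univ).toReal = ρ := hmassg
    have hsplit : (∫ w, φ w ∂(g t)) - ρ * φ m = ∫ w, (φ w - φ m) ∂(g t) := by
      rw [integral_sub hint (integrable_const _), integral_const, smul_eq_mul, measureReal_def, hρt]
    have hbound : ∀ᵐ w ∂(g t), ‖φ w - φ m‖ ≤ (ε' / 4) + s.indicator (fun _ => 2 * B) w := by
      filter_upwards [ae_mem_Icc hsupp] with w hw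
      by_cases hws : w ∈ s
      · rw [Set.indicator_of_mem hws]
        have h1 : ‖φ w‖ ≤ B := hB w hw
        have h2 : ‖φ m‖ ≤ B := hB m hmIcc
        calc ‖φ w - φ m‖ ≤ ‖φ w‖ + ‖φ m‖ := norm_sub_le _ _
          _ ≤ ε' / 4 + 2 * B := by linarith
      · rw [Set.indicator_of_notMem hws, add_zero]
        have hlt : |w - m| < δ := by
          simp only [hset, mem_setOf_eq, not_le] at hws
          exact hws
        have hd := hδ (x := w) (by rwa [Real.dist_eq])
        rw [dist_eq_norm] at hd
        linarith [hd]
    have hibound : Integrable (fun w => (ε' / 4) + s.indicator (fun _ => 2 * B) w) (g t) :=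
      (integrable_const _).add
        ((integrable_indicator_iff hsmeas).2 (integrable_const _).integrableOn)
    have hnorm : ‖∫ w, (φ w - φ m) ∂(g t)‖ ≤ (ε' / 4) * ρ + 2 * B * ((g t) s).toReal := by
      calc ‖∫ w, (φ w - φ m) ∂(g t)‖ ≤ ∫ w, ‖φ w - φ m‖ ∂(g t) :=
            norm_integral_le_integral_norm _
        _ ≤ ∫ w, ((ε' / 4) + s.indicator (fun _ => 2 * B) w) ∂(g t) :=
            integral_mono_ae ((hint.sub (integrable_const _)).norm) hibound hbound
        _ = (ε' / 4) * ρ + 2 * B * ((g t) s).toReal := by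
            rw [integral_add (integrable_const _)
              ((integrable_indicator_iff hsmeas).2 (integrable_const _).integrableOn),
              integral_const, integral_indicator hsmeas, setIntegral_const, smul_eq_mul,
              smul_eq_mul]
            simp only [measureReal_def]
            rw [hρt]
            ring
    rw [Real.dist_eq]
    have habs : |(∫ w, φ w ∂(g t)) - ρ * φ m| ≤ (ε' / 4) * ρ + 2 * B * ((g t) s).toReal := by
      rw [hsplit, ← Real.norm_eq_abs]
      exact hnorm
    have hVsmul : Vfn t * (B + 1) < (ε' / 8) * δ ^ 2 := by
      rw [lt_div_iff₀ (by linarith : (0:ℝ) < B + 1)] at hVs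
      exact hVs
    have hgsδ : ((g t) s).toReal * δ ^ 2 ≤ Vfn t := by
      rw [le_div_iff₀ (pow_pos hδpos 2)] at hgs
      exact hgs
    have h3 : ((g t) s).toReal * (B + 1) < ε' / 8 := by
      have h6' := mul_le_mul_of_nonneg_right hgsδ (by linarith : (0:ℝ) ≤ B + 1)
      have h7' : ((g t) s).toReal * (B + 1) * δ ^ 2 < ε' / 8 * δ ^ 2 := by
        calc ((g t) s).toReal * (B + 1) * δ ^ 2
            = ((g t) s).toReal * δ ^ 2 * (B + 1) := by ring
          _ ≤ Vfn t * (B + 1) := h6'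
          _ < ε' / 8 * δ ^ 2 := hVsmul
      exact lt_of_mul_lt_mul_right h7' (pow_pos hδpos 2).le
    have h4 : 2 * B * ((g t) s).toReal < ε' / 4 := by nlinarith [h3, hgsnn, hBnn]
    have h5 : (ε' / 4) * ρ ≤ ε' / 4 := by nlinarith [hρle, hρnn, hε']
    show |(∫ w, φ w ∂(g t)) - ρ * φ m| < ε'
    linarith [habs, h4, h5]
  -- ### conclusion
  have hgI : ∀ t ∈ Ici (0:ℝ), IsFiniteMeasure (fI t) ∧ SuppIcc (fI t) ∧ fI t ≤ fS t + fI t ∧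
      ((fI t) univ).toReal = ((fI 0) univ).toReal := fun t ht =>
    ⟨(hreg t ht).2.1, (hreg t ht).2.2.2, Measure.le_add_left le_rfl, hmassI t ht⟩
  have hgS : ∀ t ∈ Ici (0:ℝ), IsFiniteMeasure (fS t) ∧ SuppIcc (fS t) ∧ fS t ≤ fS t + fI t ∧
      ((fS t) univ).toReal = ((fS 0) univ).toReal := fun t ht =>
    ⟨(hreg t ht).1, (hreg t ht).2.2.1, Measure.le_add_right le_rfl, hmassS t ht⟩
  refine ⟨key fI hgI, key fS hgS, ⟨Creal, hCrealpos, fun t ht => ?_⟩⟩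
  rw [hvar t ht, hvar 0 Set.self_mem_Ici]
  have h1 := hVle t ht
  have h2 : Real.exp (-Creal * t / ε) = Real.exp (-(Creal / ε) * t) := by
    congr 1; ring
  rw [h2]
  exact h1
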